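/- For τ in the upper half plane and q = e^{2πiτ}, the two evaluations R(−τ−1/2; 2τ) = i q^{1/4} and R(−τ−1; 2τ) = −q^{1/4} hold, where R(u;τ) = ∑_{ν ∈ 1/2+ℤ} (sgn(ν) − E((ν + Im(u)/Im(τ))·√(2 Im τ))) · (−1)^{ν−1/2} e^{−πiν²τ} e^{−2πiνu}. -/

import Mathlib

open scoped BigOperators

/-- `E(t) = 2∫₀ᵗ e^{−πu²} du`. -/
noncomputable def Efun (t : ℝ) : ℝ := 2 * ∫ u in (0:ℝ)..t, Real.exp (-Real.pi * u ^ 2)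

/-- Zwegers' function
`R(u;τ) = ∑_{ν ∈ 1/2+ℤ} (sgn(ν) − E((ν + Im u / Im τ)√(2 Im τ)))(−1)^{ν−1/2} e^{−πiν²τ} e^{−2πiνu}`,
indexed by `ν = n + 1/2`, `n ∈ ℤ`. -/
noncomputable def Rfun (u τ : ℂ) : ℂ :=
  ∑' n : ℤ,
    ((Real.sign ((n : ℝ) + 1/2)
        - Efun (((n : ℝ) + 1/2 + u.im / τ.im) * Real.sqrt (2 * τ.im)) : ℝ) : ℂ)
      * (-1 : ℂ) ^ n
      * Complex.exp (-Real.pi * Complex.I * ((n : ℂ) + 1/2) ^ 2 * τ)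
      * Complex.exp (-2 * Real.pi * Complex.I * ((n : ℂ) + 1/2) * u)

section RfunAux

open MeasureTheory Real

lemma gauss_int : Integrable (fun u : ℝ => Real.exp (-Real.pi * u ^ 2)) :=
  integrable_exp_neg_mul_sq Real.pi_pos

lemma Efun_zero : Efun 0 = 0 := by simp [Efun]

lemma Efun_neg (t : ℝ) : Efun (-t) = - Efun t := by
  unfold Efun
  have h : ∫ u in (0:ℝ)..(-t), Real.exp (-Real.pi * u ^ 2)
      = ∫ u in (0:ℝ)..(-t), (fun x => Real.exp (-Real.pi * x ^ 2)) (-u) := by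
    simp [neg_sq]
  rw [h, intervalIntegral.integral_comp_neg (fun x => Real.exp (-Real.pi * x ^ 2))]
  rw [neg_zero, intervalIntegral.integral_symm, neg_neg]
  ring

lemma Efun_eq_Ioc {t : ℝ} (ht : 0 ≤ t) :
    Efun t = 2 * ∫ x in Set.Ioc 0 t, Real.exp (-Real.pi * x ^ 2) := by
  rw [Efun, intervalIntegral.integral_of_le ht]

lemma gauss_Ioi : ∫ x in Set.Ioi (0:ℝ), Real.exp (-Real.pi * x ^ 2) = 1/2 := by
  rw [integral_gaussian_Ioi, div_self Real.pi_pos.ne', Real.sqrt_one]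

lemma Efun_split {t : ℝ} (ht : 0 ≤ t) :
    1 - Efun t = 2 * ∫ x in Set.Ioi t, Real.exp (-Real.pi * x ^ 2) := by
  have hu : Set.Ioc (0:ℝ) t ∪ Set.Ioi t = Set.Ioi 0 := Set.Ioc_union_Ioi_eq_Ioi ht
  have hsplit : (∫ x in Set.Ioc (0:ℝ) t, Real.exp (-Real.pi * x ^ 2))
      + ∫ x in Set.Ioi t, Real.exp (-Real.pi * x ^ 2)
      = ∫ x in Set.Ioi (0:ℝ), Real.exp (-Real.pi * x ^ 2) := by
    rw [← MeasureTheory.setIntegral_union (Set.Ioc_disjoint_Ioi le_rfl) measurableSet_Ioi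
      gauss_int.integrableOn gauss_int.integrableOn, hu]
  rw [Efun_eq_Ioc ht]
  rw [gauss_Ioi] at hsplit
  linarith

lemma Efun_nonneg {t : ℝ} (ht : 0 ≤ t) : 0 ≤ Efun t := by
  refine mul_nonneg (by norm_num) (intervalIntegral.integral_nonneg ht fun u _ => (Real.exp_pos _).le)

lemma Efun_le_one {t : ℝ} (ht : 0 ≤ t) : Efun t ≤ 1 := by
  have := Efun_split ht
  have h0 : 0 ≤ ∫ x in Set.Ioi t, Real.exp (-Real.pi * x ^ 2) :=
    setIntegral_nonneg measurableSet_Ioi fun x _ => (Real.exp_pos _).le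
  linarith

lemma Efun_tail {t : ℝ} (ht : 0 ≤ t) : 1 - Efun t ≤ 2 * Real.exp (-Real.pi * t ^ 2) := by
  rw [Efun_split ht]
  have hshift : Integrable (fun x : ℝ => Real.exp (-Real.pi * (x - t) ^ 2)) := by
    have := gauss_int.comp_sub_right t
    exact this
  have hbd : ∫ x in Set.Ioi t, Real.exp (-Real.pi * x ^ 2)
      ≤ ∫ x in Set.Ioi t, Real.exp (-Real.pi * t ^ 2) * Real.exp (-Real.pi * (x - t) ^ 2) := by
    refine setIntegral_mono_on gauss_int.integrableOn
      ((hshift.const_mul _).integrableOn) measurableSet_Ioi fun x hx => ?_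
    rw [← Real.exp_add]
    apply Real.exp_le_exp.2
    have hx' : t ≤ x := le_of_lt hx
    nlinarith [mul_nonneg (mul_nonneg Real.pi_pos.le ht) (sub_nonneg.2 hx')]
  have h2 : ∫ x in Set.Ioi t, Real.exp (-Real.pi * t ^ 2) * Real.exp (-Real.pi * (x - t) ^ 2)
      = Real.exp (-Real.pi * t ^ 2) * ∫ x in Set.Ioi t, Real.exp (-Real.pi * (x - t) ^ 2) := by
    rw [MeasureTheory.integral_const_mul]
  have h3 : ∫ x in Set.Ioi t, Real.exp (-Real.pi * (x - t) ^ 2) ≤ 1 := by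
    calc ∫ x in Set.Ioi t, Real.exp (-Real.pi * (x - t) ^ 2)
        ≤ ∫ x : ℝ, Real.exp (-Real.pi * (x - t) ^ 2) :=
          setIntegral_le_integral hshift (Filter.Eventually.of_forall fun x => (Real.exp_pos _).le)
      _ = ∫ x : ℝ, Real.exp (-Real.pi * x ^ 2) := by
          exact integral_sub_right_eq_self (fun x => Real.exp (-Real.pi * x ^ 2)) t
      _ = 1 := by rw [integral_gaussian, div_self Real.pi_pos.ne', Real.sqrt_one]
  have hexp : (0:ℝ) ≤ Real.exp (-Real.pi * t ^ 2) := (Real.exp_pos _).le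
  nlinarith

noncomputable def cseq (y : ℝ) (n : ℤ) : ℝ :=
  Real.sign ((n : ℝ) + 1/2) - Efun ((n : ℝ) * Real.sqrt (4 * y))

lemma cseq_zero (y : ℝ) : cseq y 0 = 1 := by
  unfold cseq
  rw [show ((0:ℤ):ℝ) = 0 by norm_num, zero_mul, Efun_zero,
    Real.sign_of_pos (by norm_num : (0:ℝ) < 0 + 1/2)]
  ring

lemma cseq_neg (y : ℝ) {n : ℤ} (hn : n ≠ 0) : cseq y (-n) = - cseq y n := by
  have hsign : Real.sign (-(n : ℝ) + 1/2) = - Real.sign ((n : ℝ) + 1/2) := by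
    rcases lt_or_gt_of_ne hn with h | h
    · have h1 : (n : ℝ) ≤ -1 := by exact_mod_cast (by omega : n ≤ -1)
      rw [Real.sign_of_pos (by linarith : (0:ℝ) < -(n:ℝ) + 1/2),
        Real.sign_of_neg (by linarith : (n:ℝ) + 1/2 < 0)]
      norm_num
    · have h1 : (1 : ℝ) ≤ (n : ℝ) := by exact_mod_cast h
      rw [Real.sign_of_neg (by linarith : -(n:ℝ) + 1/2 < 0),
        Real.sign_of_pos (by linarith : (0:ℝ) < (n:ℝ) + 1/2)]
  unfold cseq
  push_cast
  rw [hsign, show (-(n:ℝ)) * Real.sqrt (4*y) = -((n:ℝ) * Real.sqrt (4*y)) by ring, Efun_neg]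
  ring

lemma cseq_bound {y : ℝ} (hy : 0 ≤ y) (n : ℤ) :
    |cseq y n| ≤ 2 * Real.exp (-Real.pi * (4 * y) * (n:ℝ)^2) := by
  have key : ∀ m : ℤ, 0 < m → |cseq y m| ≤ 2 * Real.exp (-Real.pi * (4 * y) * (m:ℝ)^2) := by
    intro m hm
    have h1 : (1:ℝ) ≤ (m:ℝ) := by exact_mod_cast hm
    have ht : 0 ≤ (m : ℝ) * Real.sqrt (4 * y) := by positivity
    have hsq : ((m : ℝ) * Real.sqrt (4 * y)) ^ 2 = (4 * y) * (m:ℝ)^2 := by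
      rw [mul_pow, Real.sq_sqrt (by linarith : (0:ℝ) ≤ 4 * y)]; ring
    have hsig : Real.sign ((m : ℝ) + 1/2) = 1 := Real.sign_of_pos (by linarith)
    have hE1 := Efun_le_one ht
    have hE2 := Efun_tail ht
    rw [hsq] at hE2
    unfold cseq
    rw [hsig, abs_of_nonneg (by linarith)]
    have harg : -Real.pi * ((4*y) * (m:ℝ)^2) = -Real.pi * (4*y) * (m:ℝ)^2 := by ring
    rw [harg] at hE2
    exact hE2
  rcases lt_trichotomy n 0 with h | h | h
  · have hpos := key (-n) (by omega)
    have h2 : ((-n : ℤ) : ℝ) ^ 2 = ((n : ℤ) : ℝ) ^ 2 := by push_cast; ring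
    rw [cseq_neg y (by omega), abs_neg, h2] at hpos
    exact hpos
  · subst h
    rw [cseq_zero]
    have : ((0:ℤ):ℝ) = 0 := by norm_num
    rw [this]
    norm_num
  · exact key n h

-- tsum machinery
lemma tsum_odd {f : ℤ → ℂ} (h : ∀ n, f (-n) = - f n) : ∑' n, f n = 0 := by
  have h1 : ∑' n : ℤ, f (-n) = ∑' n, f n := (Equiv.neg ℤ).tsum_eq f
  simp_rw [h, tsum_neg] at h1
  linear_combination (-(1:ℂ)/2) * h1

lemma tsum_eq_f0 {f : ℤ → ℂ} (hf : Summable f) (h : ∀ n : ℤ, n ≠ 0 → f (-n) = - f n) :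
    ∑' n, f n = f 0 := by
  set g : ℤ → ℂ := fun n => if n = 0 then 0 else f n with hg
  have hδ : Summable (fun n : ℤ => if n = 0 then f 0 else 0) := by
    apply summable_of_ne_finset_zero (s := {(0:ℤ)})
    intro b hb
    simp only [Finset.mem_singleton] at hb
    simp [hb]
  have hgf : ∀ n, f n = g n + if n = 0 then f 0 else 0 := by
    intro n; by_cases hn : n = 0 <;> simp [hg, hn]
  have hgsum : Summable g := by
    have : g = fun n => f n - if n = 0 then f 0 else 0 := by
      ext n; by_cases hn : n = 0 <;> simp [hg, hn]
    rw [this]; exact hf.sub hδ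
  have hgodd : ∀ n, g (-n) = - g n := by
    intro n
    by_cases hn : n = 0
    · simp [hg, hn]
    · have : (-n : ℤ) ≠ 0 := by omega
      simp only [hg, if_neg hn, if_neg this]
      exact h n hn
  calc ∑' n, f n = ∑' n, (g n + if n = 0 then f 0 else 0) := tsum_congr hgf
    _ = (∑' n, g n) + ∑' n : ℤ, if n = 0 then f 0 else 0 := hgsum.tsum_add hδ
    _ = 0 + f 0 := by rw [tsum_odd hgodd, tsum_ite_eq]
    _ = f 0 := by ring

lemma tsum_S (τ : ℂ) (hτ : 0 < τ.im) (ε : ℤ → ℂ) (hεn : ∀ n, ‖ε n‖ = 1)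
    (hεe : ∀ n, ε (-n) = ε n) (hε0 : ε 0 = 1) :
    ∑' n : ℤ, ((cseq τ.im n : ℝ) : ℂ) * ε n
      * Complex.exp (-(2*Real.pi) * Complex.I * τ * (n:ℂ)^2) = 1 := by
  set y := τ.im with hy
  set F : ℤ → ℂ := fun n => ((cseq y n : ℝ) : ℂ) * ε n
      * Complex.exp (-(2*Real.pi) * Complex.I * τ * (n:ℂ)^2) with hF
  have hnorm : ∀ n : ℤ, ‖F n‖ = |cseq y n| * Real.exp (2*Real.pi*y*(n:ℝ)^2) := by
    intro n
    have harg : (-(2*Real.pi) * Complex.I * τ * (n:ℂ)^2).re = 2*Real.pi*y*(n:ℝ)^2 := by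
      have h' : (-(2*Real.pi) * Complex.I * τ * (n:ℂ)^2)
          = ((-(2*Real.pi) * (n:ℝ)^2 : ℝ) : ℂ) * (Complex.I * τ) := by push_cast; ring
      rw [h', Complex.mul_re]
      simp only [Complex.ofReal_re, Complex.ofReal_im, Complex.mul_re, Complex.mul_im,
        Complex.I_re, Complex.I_im]
      ring
    rw [hF]
    simp only [norm_mul, Complex.norm_real, Real.norm_eq_abs, hεn n, mul_one]
    rw [Complex.norm_exp, harg]
  have hbound : ∀ n : ℤ, ‖F n‖ ≤ 2 * Real.exp (-(2*Real.pi*y)) ^ n.natAbs := by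
    intro n
    rw [hnorm n]
    have h1 := cseq_bound hτ.le n
    have h2 : |cseq y n| * Real.exp (2*Real.pi*y*(n:ℝ)^2)
        ≤ (2 * Real.exp (-Real.pi * (4*y) * (n:ℝ)^2)) * Real.exp (2*Real.pi*y*(n:ℝ)^2) :=
      mul_le_mul_of_nonneg_right h1 (Real.exp_pos _).le
    have h3 : (2 * Real.exp (-Real.pi * (4*y) * (n:ℝ)^2)) * Real.exp (2*Real.pi*y*(n:ℝ)^2)
        = 2 * Real.exp (-(2*Real.pi*y) * (n:ℝ)^2) := by
      rw [mul_assoc, ← Real.exp_add]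
      congr 2
      ring
    have h4 : Real.exp (-(2*Real.pi*y) * (n:ℝ)^2) ≤ Real.exp (-(2*Real.pi*y)) ^ n.natAbs := by
      rw [← Real.exp_nat_mul]
      apply Real.exp_le_exp.2
      have habs : |(n:ℝ)| = (n.natAbs : ℝ) := by
        rw [← Int.cast_abs, Int.abs_eq_natAbs, Int.cast_natCast]
      have hsq : (n:ℝ)^2 = ((n.natAbs : ℝ))^2 := by rw [← sq_abs, habs]
      have hle : (n.natAbs : ℝ) ≤ ((n.natAbs : ℝ))^2 := by
        rcases Nat.eq_zero_or_pos n.natAbs with h0 | h0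
        · simp [h0]
        · have : (1:ℝ) ≤ (n.natAbs : ℝ) := by exact_mod_cast h0
          nlinarith
      have hpy : 0 < 2*Real.pi*y := by positivity
      rw [hsq]
      nlinarith
    calc |cseq y n| * Real.exp (2*Real.pi*y*(n:ℝ)^2)
        ≤ 2 * Real.exp (-(2*Real.pi*y) * (n:ℝ)^2) := by rw [← h3]; exact h2
      _ ≤ 2 * Real.exp (-(2*Real.pi*y)) ^ n.natAbs := by linarith [h4]
  have hmaj : Summable (fun n : ℤ => 2 * Real.exp (-(2*Real.pi*y)) ^ n.natAbs) := by
    have hr : Real.exp (-(2*Real.pi*y)) < 1 := by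
      rw [Real.exp_lt_one_iff]
      have : 0 < 2*Real.pi*y := by positivity
      linarith
    have hgeo : Summable (fun n : ℕ => 2 * Real.exp (-(2*Real.pi*y)) ^ n) :=
      (summable_geometric_of_lt_one (Real.exp_pos _).le hr).mul_left 2
    apply Summable.of_nat_of_neg
    · exact hgeo.congr (by intro n; simp)
    · exact hgeo.congr (by intro n; simp)
  have hsum : Summable F := Summable.of_norm_bounded hmaj hbound
  have hodd : ∀ n : ℤ, n ≠ 0 → F (-n) = - F n := by
    intro n hn
    rw [hF]
    simp only
    rw [cseq_neg y hn, hεe n]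
    have : ((-n : ℤ) : ℂ)^2 = ((n : ℤ) : ℂ)^2 := by push_cast; ring
    rw [this]
    push_cast
    ring
  rw [tsum_eq_f0 hsum hodd, hF]
  simp only
  rw [cseq_zero, hε0]
  norm_num

end RfunAux

/-- With `q^{1/4} = e^{πiτ/2}`: `R(−τ−1/2; 2τ) = i q^{1/4}` and `R(−τ−1; 2τ) = −q^{1/4}`. -/
theorem Rfun_special_values (τ : ℂ) (hτ : 0 < τ.im) :
    Rfun (-τ - 1/2) (2 * τ) = Complex.I * Complex.exp (Real.pi * Complex.I * τ / 2) ∧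
    Rfun (-τ - 1) (2 * τ) = -Complex.exp (Real.pi * Complex.I * τ / 2) := by
  have h2im : (2 * τ : ℂ).im = 2 * τ.im := by simp
  have h0 : τ.im ≠ 0 := ne_of_gt hτ
  have hexpI : Complex.exp ((Real.pi/2 : ℝ) * Complex.I) = Complex.I := by
    rw [Complex.exp_mul_I, ← Complex.ofReal_cos, ← Complex.ofReal_sin,
      Real.cos_pi_div_two, Real.sin_pi_div_two]
    norm_num
  constructor
  · -- case u = -τ - 1/2
    have hre : ∀ n : ℤ, ((n : ℝ) + 1/2 + (-τ - 1/2 : ℂ).im / (2 * τ : ℂ).im)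
        * Real.sqrt (2 * (2 * τ : ℂ).im) = (n : ℝ) * Real.sqrt (4 * τ.im) := by
      intro n
      have him : (-τ - 1/2 : ℂ).im = -τ.im := by simp
      rw [him, h2im, show (2:ℝ)*(2*τ.im) = 4*τ.im by ring]
      congr 1
      field_simp
      ring
    have key : ∀ n : ℤ,
        ((Real.sign ((n : ℝ) + 1/2)
          - Efun (((n : ℝ) + 1/2 + (-τ - 1/2 : ℂ).im / (2 * τ : ℂ).im)
              * Real.sqrt (2 * (2 * τ : ℂ).im)) : ℝ) : ℂ)
          * (-1 : ℂ) ^ n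
          * Complex.exp (-Real.pi * Complex.I * ((n : ℂ) + 1/2) ^ 2 * (2 * τ))
          * Complex.exp (-2 * Real.pi * Complex.I * ((n : ℂ) + 1/2) * (-τ - 1/2))
        = (Complex.I * Complex.exp (Real.pi * Complex.I * τ / 2))
          * (((cseq τ.im n : ℝ) : ℂ) * (1 : ℂ)
            * Complex.exp (-(2*Real.pi) * Complex.I * τ * (n:ℂ)^2)) := by
      intro n
      rw [hre n]
      have hexp : Complex.exp (-Real.pi * Complex.I * ((n : ℂ) + 1/2) ^ 2 * (2 * τ))
          * Complex.exp (-2 * Real.pi * Complex.I * ((n : ℂ) + 1/2) * (-τ - 1/2))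
          = Complex.exp (-(2*Real.pi) * Complex.I * τ * (n:ℂ)^2)
            * Complex.exp (Real.pi * Complex.I * τ / 2)
            * Complex.exp ((n : ℂ) * (Real.pi * Complex.I))
            * Complex.exp ((Real.pi/2 : ℝ) * Complex.I) := by
        simp only [← Complex.exp_add]
        congr 1
        push_cast
        ring
      have hn1 : Complex.exp ((n : ℂ) * (Real.pi * Complex.I)) = (-1 : ℂ) ^ n := by
        rw [Complex.exp_int_mul, Complex.exp_pi_mul_I]
      have hsq : (-1 : ℂ) ^ n * (-1 : ℂ) ^ n = 1 := by
        rw [← mul_zpow]; norm_num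
      rw [hn1, hexpI] at hexp
      simp only [cseq]
      linear_combination (((Real.sign ((n : ℝ) + 1/2)
            - Efun ((n : ℝ) * Real.sqrt (4 * τ.im)) : ℝ) : ℂ) * (-1:ℂ)^n) * hexp
        + (((Real.sign ((n : ℝ) + 1/2) - Efun ((n : ℝ) * Real.sqrt (4 * τ.im)) : ℝ) : ℂ)
          * Complex.exp (-(2*Real.pi) * Complex.I * τ * (n:ℂ)^2)
          * Complex.exp (Real.pi * Complex.I * τ / 2) * Complex.I) * hsq
    rw [Rfun, tsum_congr key, tsum_mul_left,
      tsum_S τ hτ (fun _ => 1) (by intro n; simp) (by intro n; rfl) rfl, mul_one]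
  · -- case u = -τ - 1
    have hre : ∀ n : ℤ, ((n : ℝ) + 1/2 + (-τ - 1 : ℂ).im / (2 * τ : ℂ).im)
        * Real.sqrt (2 * (2 * τ : ℂ).im) = (n : ℝ) * Real.sqrt (4 * τ.im) := by
      intro n
      have him : (-τ - 1 : ℂ).im = -τ.im := by simp
      rw [him, h2im, show (2:ℝ)*(2*τ.im) = 4*τ.im by ring]
      congr 1
      field_simp
      ring
    have key : ∀ n : ℤ,
        ((Real.sign ((n : ℝ) + 1/2)
          - Efun (((n : ℝ) + 1/2 + (-τ - 1 : ℂ).im / (2 * τ : ℂ).im)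
              * Real.sqrt (2 * (2 * τ : ℂ).im)) : ℝ) : ℂ)
          * (-1 : ℂ) ^ n
          * Complex.exp (-Real.pi * Complex.I * ((n : ℂ) + 1/2) ^ 2 * (2 * τ))
          * Complex.exp (-2 * Real.pi * Complex.I * ((n : ℂ) + 1/2) * (-τ - 1))
        = (-Complex.exp (Real.pi * Complex.I * τ / 2))
          * (((cseq τ.im n : ℝ) : ℂ) * (-1 : ℂ) ^ n
            * Complex.exp (-(2*Real.pi) * Complex.I * τ * (n:ℂ)^2)) := by
      intro n
      rw [hre n]
      have hexp : Complex.exp (-Real.pi * Complex.I * ((n : ℂ) + 1/2) ^ 2 * (2 * τ))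
          * Complex.exp (-2 * Real.pi * Complex.I * ((n : ℂ) + 1/2) * (-τ - 1))
          = Complex.exp (-(2*Real.pi) * Complex.I * τ * (n:ℂ)^2)
            * Complex.exp (Real.pi * Complex.I * τ / 2)
            * Complex.exp ((n : ℂ) * (2 * Real.pi * Complex.I))
            * Complex.exp ((Real.pi : ℂ) * Complex.I) := by
        simp only [← Complex.exp_add]
        congr 1
        ring
      have hn1 : Complex.exp ((n : ℂ) * (2 * Real.pi * Complex.I)) = 1 := by
        exact Complex.exp_int_mul_two_pi_mul_I n
      rw [hn1, Complex.exp_pi_mul_I] at hexp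
      simp only [cseq]
      linear_combination (((Real.sign ((n : ℝ) + 1/2)
            - Efun ((n : ℝ) * Real.sqrt (4 * τ.im)) : ℝ) : ℂ) * (-1:ℂ)^n) * hexp
    rw [Rfun, tsum_congr key, tsum_mul_left,
      tsum_S τ hτ (fun n => (-1:ℂ)^n)
        (by intro n; rw [norm_zpow]; norm_num)
        (by intro n; rw [zpow_neg, ← inv_zpow, inv_neg, inv_one])
        (by simp), mul_one]
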